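/- arXiv:2001.01908 — 2 statements merged into one kernel-verified Lean document; each statement's English description precedes it below -/
import Mathlib

section
/- For any integers q ≥ p ≥ 2, the orientation number of the complete tripartite graph K(2,p,q) equals 2 if and only if q ≤ C(p, ⌊p/2⌋). -/
/-- `hasPath D u v n`: there is a directed walk of length `n` from `u` to `v` in digraph `D`. -/
def hasPath {V : Type*} (D : V → V → Prop) (u v : V) : ℕ → Prop
  | 0 => u = v
  | n + 1 => ∃ w, D u w ∧ hasPath D w v n

/-- Directed distance in a digraph, `⊤` if unreachable. -/
noncomputable def ddist {V : Type*} (D : V → V → Prop) (u v : V) : ℕ∞ :=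
  sInf {n : ℕ∞ | ∃ m : ℕ, hasPath D u v m ∧ n = m}

/-- Diameter of a digraph. -/
noncomputable def ddiam (V : Type*) (D : V → V → Prop) : ℕ∞ :=
  ⨆ u : V, ⨆ v : V, ddist D u v

/-- `D` is an orientation of the simple graph `G`: every arc lies on an edge, and each
edge gets exactly one direction. -/
def IsOrientation {V : Type*} (G : SimpleGraph V) (D : V → V → Prop) : Prop :=
  (∀ u v, D u v → G.Adj u v) ∧ ∀ u v, G.Adj u v → (D u v ↔ ¬ D v u)

/-- A digraph is strong if every vertex can reach every other. -/
def IsStrong {V : Type*} (D : V → V → Prop) : Prop :=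
  ∀ u v : V, ∃ m : ℕ, hasPath D u v m

/-- The orientation number of a graph: minimum diameter over strong orientations. -/
noncomputable def orientationNumber {V : Type*} (G : SimpleGraph V) : ℕ∞ :=
  sInf {n : ℕ∞ | ∃ D : V → V → Prop, IsOrientation G D ∧ IsStrong D ∧ ddiam V D = n}

/-- The complete tripartite graph `K(a,b,c)`. -/
def Ktri (a b c : ℕ) : SimpleGraph (Σ i : Fin 3, Fin (![a, b, c] i)) :=
  SimpleGraph.completeMultipartiteGraph fun i => Fin (![a, b, c] i)


-- ## Infrastructure
variable {V : Type*} {D : V → V → Prop} {u v : V}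

lemma ddist_le {m : ℕ} (h : hasPath D u v m) : ddist D u v ≤ m := sInf_le ⟨m, h, rfl⟩

lemma exists_hasPath_of_ddist_le {k : ℕ} (h : ddist D u v ≤ k) : ∃ m ≤ k, hasPath D u v m := by
  have h2 : ddist D u v < (k + 1 : ℕ) := lt_of_le_of_lt h (by exact_mod_cast Nat.lt_succ_self k)
  rw [ddist, sInf_lt_iff] at h2
  obtain ⟨n, ⟨m, hm, rfl⟩, hlt⟩ := h2
  exact ⟨m, by exact_mod_cast Nat.lt_succ_iff.mp (by exact_mod_cast hlt), hm⟩

lemma ddiam_le {k : ℕ∞} (h : ∀ u v : V, ddist D u v ≤ k) : ddiam V D ≤ k := by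
  exact iSup_le fun u => iSup_le fun v => h u v

lemma ddist_le_ddiam : ddist D u v ≤ ddiam V D :=
  le_trans (le_iSup (fun w => ddist D u w) v) (le_iSup (fun w => ⨆ z, ddist D w z) u)

lemma two_le_ddist {G : SimpleGraph V} (hor : IsOrientation G D)
    (hne : u ≠ v) (hnadj : ¬ G.Adj u v) : 2 ≤ ddist D u v := by
  refine le_sInf ?_
  rintro n ⟨m, hm, rfl⟩
  match m, hm with
  | 0, hm => exact absurd hm hne
  | 1, hm => obtain ⟨w, h1, h2⟩ := hm; cases h2; exact absurd (hor.1 _ _ h1) hnadj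
  | (n+2), hm => exact_mod_cast le_add_self

lemma step_of_ddist_le_two (h : ddist D u v ≤ 2) :
    u = v ∨ D u v ∨ ∃ w, D u w ∧ D w v := by
  obtain ⟨m, hm, hp⟩ := exists_hasPath_of_ddist_le h
  match m, hm, hp with
  | 0, _, hp => exact Or.inl hp
  | 1, _, hp => obtain ⟨w, h1, h2⟩ := hp; cases h2; exact Or.inr (Or.inl h1)
  | 2, _, hp =>
    obtain ⟨w, h1, w2, h2, h3⟩ := hp; cases h3; exact Or.inr (Or.inr ⟨w, h1, h2⟩)

lemma ddist_le_two_of_step (h : u = v ∨ D u v ∨ ∃ w, D u w ∧ D w v) : ddist D u v ≤ 2 := by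
  rcases h with rfl | h | ⟨w, h1, h2⟩
  · exact le_trans (ddist_le (m := 0) rfl) (by norm_num)
  · exact le_trans (ddist_le (m := 1) ⟨v, h, rfl⟩) (by norm_num)
  · exact ddist_le (m := 2) ⟨w, h1, v, h2, rfl⟩



lemma central_choose_mono : Monotone (fun n : ℕ => n.choose (n / 2)) := by
  refine monotone_nat_of_le_succ ?_
  intro n
  show n.choose (n / 2) ≤ (n + 1).choose ((n + 1) / 2)
  rcases Nat.even_or_odd n with ⟨t, rfl⟩ | ⟨t, rfl⟩
  · rcases Nat.eq_zero_or_pos t with rfl | ht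
    · simp
    · obtain ⟨u, rfl⟩ : ∃ u, t = u + 1 := ⟨t - 1, by omega⟩
      have h1 : (u + 1 + (u + 1)) / 2 = u + 1 := by omega
      have h2 : (u + 1 + (u + 1) + 1) / 2 = u + 1 := by omega
      rw [h1, h2, show u + 1 + (u + 1) + 1 = (u + 1 + (u + 1)) + 1 from rfl,
        show u + 1 = u + 1 from rfl, Nat.choose_succ_succ']
      exact Nat.le_add_left _ _
  · have h1 : (2 * t + 1) / 2 = t := by omega
    have h2 : (2 * t + 1 + 1) / 2 = t + 1 := by omega
    rw [h1, h2, Nat.choose_succ_succ']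
    exact Nat.le_add_right _ _

lemma central_succ (p : ℕ) (hp : 2 ≤ p) :
    (p - 1).choose ((p - 1) / 2) + 1 ≤ p.choose (p / 2) := by
  rcases Nat.even_or_odd p with ⟨t, rfl⟩ | ⟨t, rfl⟩
  · obtain ⟨u, rfl⟩ : ∃ u, t = u + 1 := ⟨t - 1, by omega⟩
    have h1 : (u + 1 + (u + 1) - 1) / 2 = u := by omega
    have h2 : (u + 1 + (u + 1)) / 2 = u + 1 := by omega
    rw [h1, h2, show u + 1 + (u + 1) - 1 = 2 * u + 1 by omega,
      show u + 1 + (u + 1) = (2 * u + 1) + 1 by omega, Nat.choose_succ_succ']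
    have : 1 ≤ (2 * u + 1).choose (u + 1) := Nat.choose_pos (by omega)
    omega
  · obtain ⟨u, rfl⟩ : ∃ u, t = u + 1 := ⟨t - 1, by omega⟩
    have h1 : (2 * (u + 1) + 1 - 1) / 2 = u + 1 := by omega
    have h2 : (2 * (u + 1) + 1) / 2 = u + 1 := by omega
    rw [h1, h2, show 2 * (u + 1) + 1 - 1 = 2 * u + 2 by omega,
      show 2 * (u + 1) + 1 = (2 * u + 2) + 1 by omega]
    have he : (2 * u + 2 + 1).choose (u + 1) = (2 * u + 2).choose u + (2 * u + 2).choose (u + 1) :=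
      Nat.choose_succ_succ' (2 * u + 2) u
    rw [he]
    have : 1 ≤ (2 * u + 2).choose u := Nat.choose_pos (by omega)
    omega

open Finset in
lemma antichain_subset_card_le {α : Type*} [DecidableEq α] (M : Finset α)
    (𝒜 : Finset (Finset α)) (h𝒜 : IsAntichain (· ⊆ ·) (𝒜 : Set (Finset α)))
    (hM : ∀ s ∈ 𝒜, s ⊆ M) : 𝒜.card ≤ M.card.choose (M.card / 2) := by
  classical
  set ψ : Finset α → Finset {x // x ∈ M} := fun s => M.attach.filter (fun x => ↑x ∈ s) with hψ
  have hψ_inj : ∀ s ∈ 𝒜, ∀ t ∈ 𝒜, ψ s = ψ t → s = t := by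
    intro s hs t ht h
    apply Finset.ext
    intro x
    constructor
    · intro hx
      have hxM : x ∈ M := hM s hs hx
      have : (⟨x, hxM⟩ : {x // x ∈ M}) ∈ ψ s := by simp [hψ, hx]
      rw [h] at this; simpa [hψ] using this
    · intro hx
      have hxM : x ∈ M := hM t ht hx
      have : (⟨x, hxM⟩ : {x // x ∈ M}) ∈ ψ t := by simp [hψ, hx]
      rw [← h] at this; simpa [hψ] using this
  have hmono : ∀ s ∈ 𝒜, ∀ t ∈ 𝒜, ψ s ⊆ ψ t → s ⊆ t := by
    intro s hs t ht h x hx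
    have hxM : x ∈ M := hM s hs hx
    have : (⟨x, hxM⟩ : {x // x ∈ M}) ∈ ψ s := by simp [hψ, hx]
    have := h this
    simpa [hψ] using this
  have hanti : IsAntichain (· ⊆ ·) (↑(𝒜.image ψ) : Set (Finset {x // x ∈ M})) := by
    rintro _ hs _ ht hne hsub
    simp only [coe_image, Set.mem_image, mem_coe] at hs ht
    obtain ⟨s, hs, rfl⟩ := hs
    obtain ⟨t, ht, rfl⟩ := ht
    have hst : s ≠ t := fun h => hne (by rw [h])
    exact h𝒜 hs ht hst (hmono s hs t ht hsub)
  have hcard : (𝒜.image ψ).card = 𝒜.card := Finset.card_image_of_injOn hψ_inj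
  have := IsAntichain.sperner hanti
  rw [hcard] at this
  simpa [Fintype.card_coe] using this

open Finset in
lemma combin_aux (p q : ℕ) (hp : 2 ≤ p)
    (P1 P2 : Finset (Fin p)) (t1 t2 : Fin q → Prop) (S : Fin q → Finset (Fin p))
    (hC1 : ∀ j j', j ≠ j' →
      (∃ i, i ∈ S j ∧ i ∉ S j') ∨ (t1 j ∧ ¬ t1 j') ∨ (t2 j ∧ ¬ t2 j'))
    (hC2a : ∀ j, t1 j → ∃ i, i ∈ P1 ∧ i ∉ S j)
    (hC2b : ∀ j, t2 j → ∃ i, i ∈ P2 ∧ i ∉ S j)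
    (hC3a : ∀ j, ¬ t1 j → ∃ i, i ∈ S j ∧ i ∉ P1)
    (hC3b : ∀ j, ¬ t2 j → ∃ i, i ∈ S j ∧ i ∉ P2)
    (hC9 : ∀ j i, i ∈ S j → (¬ t1 j ∧ i ∉ P1) ∨ (¬ t2 j ∧ i ∉ P2))
    (hC10 : ∀ j i, i ∉ S j → (t1 j ∧ i ∈ P1) ∨ (t2 j ∧ i ∈ P2))
    (hFT : ∀ j, t1 j ∨ ¬ t2 j) : q ≤ p.choose (p / 2) := by
  classical
  have h2C : 2 ≤ p.choose (p / 2) := by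
    have := central_choose_mono hp
    simpa using this
  set FF := univ.filter (fun j : Fin q => ¬ t1 j ∧ ¬ t2 j) with hFFdef
  set TF := univ.filter (fun j : Fin q => t1 j ∧ ¬ t2 j) with hTFdef
  set TT := univ.filter (fun j : Fin q => t1 j ∧ t2 j) with hTTdef
  have hsplit : FF.card + TF.card + TT.card = q := by
    have hd1 : Disjoint FF TF := by
      rw [Finset.disjoint_left]; intro j hj hj'
      simp only [hFFdef, hTFdef, mem_filter] at hj hj'; tauto
    have hd2 : Disjoint (FF ∪ TF) TT := by
      rw [Finset.disjoint_left]; intro j hj hj'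
      simp only [hFFdef, hTFdef, hTTdef, mem_filter, mem_union] at hj hj'; tauto
    have hu : FF ∪ TF ∪ TT = univ := by
      ext j
      simp only [hFFdef, hTFdef, hTTdef, mem_filter, mem_union, mem_univ, true_and, iff_true]
      rcases hFT j with h | h <;> tauto
    rw [← card_union_of_disjoint hd1, ← card_union_of_disjoint hd2, hu, card_univ, Fintype.card_fin]
  -- class facts
  have hFF_S : ∀ j ∈ FF, S j = univ := by
    intro j hj
    simp only [hFFdef, mem_filter] at hj
    refine eq_univ_iff_forall.2 fun i => ?_
    by_contra hi
    rcases hC10 j i hi with ⟨h, _⟩ | ⟨h, _⟩ <;> tauto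
  have hTT_S : ∀ j ∈ TT, S j = ∅ := by
    intro j hj
    simp only [hTTdef, mem_filter] at hj
    refine eq_empty_iff_forall_notMem.2 fun i hi => ?_
    rcases hC9 j i hi with ⟨h, _⟩ | ⟨h, _⟩ <;> tauto
  have hFF_card : FF.card ≤ 1 := by
    refine card_le_one.2 fun j hj j' hj' => ?_
    by_contra hne
    have h1 := hFF_S j hj
    have h2 := hFF_S j' hj'
    simp only [hFFdef, mem_filter] at hj hj'
    rcases hC1 j j' hne with ⟨i, _, hi⟩ | ⟨h, _⟩ | ⟨h, _⟩
    · rw [h2] at hi; exact hi (mem_univ i)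
    · tauto
    · tauto
  have hTT_card : TT.card ≤ 1 := by
    refine card_le_one.2 fun j hj j' hj' => ?_
    by_contra hne
    have h1 := hTT_S j hj
    simp only [hTTdef, mem_filter] at hj hj'
    rcases hC1 j j' hne with ⟨i, hi, _⟩ | ⟨_, h⟩ | ⟨_, h⟩
    · rw [h1] at hi; exact absurd hi (notMem_empty i)
    · tauto
    · tauto
  -- TF structure
  have hTF_lower : ∀ j ∈ TF, ∀ i, i ∉ P1 → i ∈ S j := by
    intro j hj i hi
    simp only [hTFdef, mem_filter] at hj
    by_contra his
    rcases hC10 j i his with ⟨_, h⟩ | ⟨h, _⟩ <;> tauto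
  have hTF_upper : ∀ j ∈ TF, ∀ i, i ∈ S j → i ∉ P2 := by
    intro j hj i hi
    simp only [hTFdef, mem_filter] at hj
    rcases hC9 j i hi with ⟨h, _⟩ | ⟨_, h⟩ <;> tauto
  -- the antichain image
  set L : Finset (Fin p) := P1ᶜ with hL
  set U : Finset (Fin p) := P2ᶜ with hU
  have hLS : ∀ j ∈ TF, L ⊆ S j := by
    intro j hj i hi
    exact hTF_lower j hj i (by simpa [hL] using hi)
  have hSU : ∀ j ∈ TF, S j ⊆ U := by
    intro j hj i hi
    simpa [hU] using hTF_upper j hj i hi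
  have hS_recover : ∀ j ∈ TF, S j = (S j \ L) ∪ L := by
    intro j hj
    rw [Finset.sdiff_union_self_eq_union, Finset.union_eq_left.2 (hLS j hj)]
  have hSsub : ∀ j ∈ TF, ∀ j' ∈ TF, S j ⊆ S j' → j = j' := by
    intro j hj j' hj' hsub
    by_contra hne
    have h1 := hj; have h2 := hj'
    simp only [hTFdef, mem_filter] at h1 h2
    rcases hC1 j j' hne with ⟨i, hi1, hi2⟩ | ⟨_, h⟩ | ⟨h, _⟩
    · exact hi2 (hsub hi1)
    · tauto
    · tauto
  set ℬ : Finset (Finset (Fin p)) := TF.image (fun j => S j \ L) with hB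
  have hB_inj : ∀ j ∈ TF, ∀ j' ∈ TF, S j \ L = S j' \ L → j = j' := by
    intro j hj j' hj' h
    apply hSsub j hj j' hj'
    rw [hS_recover j hj, hS_recover j' hj', h]
  have hB_card : ℬ.card = TF.card := card_image_of_injOn hB_inj
  have hB_anti : IsAntichain (· ⊆ ·) (↑ℬ : Set (Finset (Fin p))) := by
    rintro _ hs _ ht hne hsub
    simp only [hB, coe_image, Set.mem_image, mem_coe] at hs ht
    obtain ⟨j, hj, rfl⟩ := hs
    obtain ⟨j', hj', rfl⟩ := ht
    apply hne
    have : S j ⊆ S j' := by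
      rw [hS_recover j hj, hS_recover j' hj']
      exact Finset.union_subset_union_left hsub
    rw [hSsub j hj j' hj' this]
  have hB_sub : ∀ s ∈ ℬ, s ⊆ U \ L := by
    intro s hs
    simp only [hB, mem_image] at hs
    obtain ⟨j, hj, rfl⟩ := hs
    exact Finset.sdiff_subset_sdiff (hSU j hj) le_rfl
  have hTF_bound : TF.card ≤ (U \ L).card.choose ((U \ L).card / 2) := by
    rw [← hB_card]; exact antichain_subset_card_le _ _ hB_anti hB_sub
  -- case split
  by_cases hFFne : FF.Nonempty
  · by_cases hTTne : TT.Nonempty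
    · -- both FF and TT nonempty: TF must be empty
      obtain ⟨j₀, hj₀⟩ := hFFne
      obtain ⟨j₁, hj₁⟩ := hTTne
      have hTFempty : TF = ∅ := by
        by_contra hne
        obtain ⟨j₂, hj₂⟩ := Finset.nonempty_of_ne_empty hne
        -- P1 = univ from the structure, contradiction with FF
        have hSuniv := hFF_S j₀ hj₀
        have hSempty := hTT_S j₁ hj₁
        have hFF9 : ∀ i : Fin p, i ∉ P1 ∨ i ∉ P2 := by
          intro i
          have : i ∈ S j₀ := by rw [hSuniv]; exact mem_univ i
          rcases hC9 j₀ i this with ⟨_, h⟩ | ⟨_, h⟩ <;> tauto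
        have hTT10 : ∀ i : Fin p, i ∈ P1 ∨ i ∈ P2 := by
          intro i
          have : i ∉ S j₁ := by rw [hSempty]; exact notMem_empty i
          rcases hC10 j₁ i this with ⟨_, h⟩ | ⟨_, h⟩ <;> tauto
        -- so i ∈ P1 ↔ i ∉ P2
        -- TF j₂: i ∉ P1 → i ∈ S j₂ → i ∉ P2 → i ∈ P1 : contradiction unless P1 = univ
        have hP1univ : ∀ i : Fin p, i ∈ P1 := by
          intro i
          by_contra hi
          have h1 : i ∈ S j₂ := hTF_lower j₂ hj₂ i hi
          have h2 : i ∉ P2 := hTF_upper j₂ hj₂ i h1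
          rcases hTT10 i with h | h <;> tauto
        -- but FF j₀ needs hC3a : some i ∈ S j₀ ∉ P1
        simp only [hFFdef, mem_filter] at hj₀
        obtain ⟨i, _, hi⟩ := hC3a j₀ hj₀.2.1
        exact hi (hP1univ i)
      rw [hTFempty, card_empty] at hsplit
      omega
    · -- TT empty
      rw [Finset.not_nonempty_iff_eq_empty] at hTTne
      rw [hTTne, card_empty] at hsplit
      -- q = #FF + #TF, #FF ≤ 1
      by_cases hTFne : TF.Nonempty
      · -- m ≤ p - 1 : some element of L = P1ᶜ
        obtain ⟨j₀, hj₀⟩ := hFFne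
        have hj₀' := hj₀
        simp only [hFFdef, mem_filter] at hj₀'
        obtain ⟨i₀, _, hi₀⟩ := hC3a j₀ hj₀'.2.1
        have hmlt : (U \ L).card < p := by
          have : i₀ ∉ U \ L := by
            simp only [hL, mem_sdiff, Finset.mem_compl, not_and, not_not]
            intro _; exact hi₀
          have hss : U \ L ⊂ univ := (Finset.ssubset_univ_iff).2 (fun h => this (h ▸ mem_univ i₀))
          simpa using Finset.card_lt_card hss
        have h1 : TF.card ≤ (p-1).choose ((p-1)/2) := by
          refine le_trans hTF_bound ?_
          have := central_choose_mono (show (U \ L).card ≤ p - 1 by omega)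
          simpa using this
        have := central_succ p hp
        omega
      · rw [Finset.not_nonempty_iff_eq_empty] at hTFne
        rw [hTFne, card_empty] at hsplit
        omega
  · rw [Finset.not_nonempty_iff_eq_empty] at hFFne
    rw [hFFne, card_empty] at hsplit
    by_cases hTTne : TT.Nonempty
    · by_cases hTFne : TF.Nonempty
      · obtain ⟨j₀, hj₀⟩ := hTTne
        have hj₀' := hj₀
        simp only [hTTdef, mem_filter] at hj₀'
        obtain ⟨i₀, hi₀, _⟩ := hC2b j₀ hj₀'.2.2
        have hmlt : (U \ L).card < p := by
          have : i₀ ∉ U \ L := by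
            simp only [hU, mem_sdiff, Finset.mem_compl]
            intro h; exact h.1 hi₀
          have hss : U \ L ⊂ univ := (Finset.ssubset_univ_iff).2 (fun h => this (h ▸ mem_univ i₀))
          simpa using Finset.card_lt_card hss
        have h1 : TF.card ≤ (p-1).choose ((p-1)/2) := by
          refine le_trans hTF_bound ?_
          have := central_choose_mono (show (U \ L).card ≤ p - 1 by omega)
          simpa using this
        have := central_succ p hp
        omega
      · rw [Finset.not_nonempty_iff_eq_empty] at hTFne
        rw [hTFne, card_empty] at hsplit
        omega
    · rw [Finset.not_nonempty_iff_eq_empty] at hTTne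
      rw [hTTne, card_empty] at hsplit
      have h1 : TF.card ≤ p.choose (p/2) := by
        refine le_trans hTF_bound ?_
        have hm : (U \ L).card ≤ p := by
          have := Finset.card_le_card (Finset.subset_univ (U \ L))
          simpa using this
        have := central_choose_mono hm
        simpa using this
      omega

open Finset in
lemma combin_main (p q : ℕ) (hp : 2 ≤ p)
    (P1 P2 : Finset (Fin p)) (t1 t2 : Fin q → Prop) (S : Fin q → Finset (Fin p))
    (hC1 : ∀ j j', j ≠ j' →
      (∃ i, i ∈ S j ∧ i ∉ S j') ∨ (t1 j ∧ ¬ t1 j') ∨ (t2 j ∧ ¬ t2 j'))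
    (hC2a : ∀ j, t1 j → ∃ i, i ∈ P1 ∧ i ∉ S j)
    (hC2b : ∀ j, t2 j → ∃ i, i ∈ P2 ∧ i ∉ S j)
    (hC3a : ∀ j, ¬ t1 j → ∃ i, i ∈ S j ∧ i ∉ P1)
    (hC3b : ∀ j, ¬ t2 j → ∃ i, i ∈ S j ∧ i ∉ P2)
    (hC9 : ∀ j i, i ∈ S j → (¬ t1 j ∧ i ∉ P1) ∨ (¬ t2 j ∧ i ∉ P2))
    (hC10 : ∀ j i, i ∉ S j → (t1 j ∧ i ∈ P1) ∨ (t2 j ∧ i ∈ P2)) :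
    q ≤ p.choose (p / 2) := by
  classical
  by_cases hFT : ∀ j, t1 j ∨ ¬ t2 j
  · exact combin_aux p q hp P1 P2 t1 t2 S hC1 hC2a hC2b hC3a hC3b hC9 hC10 hFT
  by_cases hTF : ∀ j, t2 j ∨ ¬ t1 j
  · refine combin_aux p q hp P2 P1 t2 t1 S ?_ hC2b hC2a hC3b hC3a ?_ ?_ hTF
    · intro j j' h
      rcases hC1 j j' h with he | h | h
      exacts [Or.inl he, Or.inr (Or.inr h), Or.inr (Or.inl h)]
    · intro j i h; rcases hC9 j i h with h | h <;> tauto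
    · intro j i h; rcases hC10 j i h with h | h <;> tauto
  -- both a TF and an FT element exist
  push_neg at hFT hTF
  obtain ⟨j₂, hj₂t1, hj₂t2⟩ := hFT   -- ¬t1 j₂, t2 j₂
  obtain ⟨j₁, hj₁t2, hj₁t1⟩ := hTF   -- ¬t2 j₁, t1 j₁
  -- hFT : ∃ j, ¬ t1 j ∧ t2 j  (from ¬∀ j, t1 j ∨ ¬ t2 j)
  have hTF_lower : ∀ j, t1 j → ¬ t2 j → ∀ i, i ∉ P1 → i ∈ S j := by
    intro j h1 h2 i hi
    by_contra his
    rcases hC10 j i his with ⟨_, h⟩ | ⟨h, _⟩ <;> tauto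
  have hTF_upper : ∀ j, t1 j → ¬ t2 j → ∀ i, i ∈ S j → i ∉ P2 := by
    intro j h1 h2 i hi
    rcases hC9 j i hi with ⟨h, _⟩ | ⟨_, h⟩ <;> tauto
  have hFT_lower : ∀ j, ¬ t1 j → t2 j → ∀ i, i ∉ P2 → i ∈ S j := by
    intro j h1 h2 i hi
    by_contra his
    rcases hC10 j i his with ⟨h, _⟩ | ⟨_, h⟩ <;> tauto
  have hFT_upper : ∀ j, ¬ t1 j → t2 j → ∀ i, i ∈ S j → i ∉ P1 := by
    intro j h1 h2 i hi
    rcases hC9 j i hi with ⟨_, h⟩ | ⟨h, _⟩ <;> tauto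
  have hPP : ∀ i, i ∈ P1 ↔ i ∈ P2 := by
    intro i
    constructor
    · intro h
      by_contra hi
      exact hFT_upper j₂ hj₂t1 hj₂t2 i (hFT_lower j₂ hj₂t1 hj₂t2 i hi) h
    · intro h
      by_contra hi
      exact hTF_upper j₁ hj₁t1 hj₁t2 i (hTF_lower j₁ hj₁t1 hj₁t2 i hi) h
  -- every j is in class TF or FT
  have hclass : ∀ j, (t1 j ∧ ¬ t2 j) ∨ (¬ t1 j ∧ t2 j) := by
    intro j
    by_contra hc
    push_neg at hc
    by_cases h1 : t1 j
    · -- then t2 j  (TT class)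
      have h2 : t2 j := by tauto
      have hSempty : S j = ∅ := by
        refine eq_empty_iff_forall_notMem.2 fun i hi => ?_
        rcases hC9 j i hi with ⟨h, _⟩ | ⟨h, _⟩ <;> tauto
      have hP1univ : ∀ i, i ∈ P1 := by
        intro i
        rcases hC10 j i (by rw [hSempty]; exact notMem_empty i) with ⟨_, h⟩ | ⟨_, h⟩
        · exact h
        · exact (hPP i).2 h
      have hSj₁ : S j₁ = ∅ := by
        refine eq_empty_iff_forall_notMem.2 fun i hi => ?_
        exact hTF_upper j₁ hj₁t1 hj₁t2 i hi ((hPP i).1 (hP1univ i))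
      have hne : j₁ ≠ j := fun h => hj₁t2 (h ▸ h2)
      rcases hC1 j₁ j hne with ⟨i, hi, _⟩ | ⟨_, h⟩ | ⟨h, _⟩
      · rw [hSj₁] at hi; exact absurd hi (notMem_empty i)
      · tauto
      · tauto
    · -- FF class
      have h2 : ¬ t2 j := by tauto
      have hSuniv : S j = univ := by
        refine eq_univ_iff_forall.2 fun i => ?_
        by_contra hi
        rcases hC10 j i hi with ⟨h, _⟩ | ⟨h, _⟩ <;> tauto
      have hP1empty : ∀ i, i ∉ P1 := by
        intro i hi
        have : i ∈ S j := by rw [hSuniv]; exact mem_univ i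
        rcases hC9 j i this with ⟨_, h⟩ | ⟨_, h⟩
        · exact h hi
        · exact h ((hPP i).1 hi)
      have hSj₁ : S j₁ = univ :=
        eq_univ_iff_forall.2 fun i => hTF_lower j₁ hj₁t1 hj₁t2 i (hP1empty i)
      have hne : j ≠ j₁ := fun h => h1 (h ▸ hj₁t1)
      rcases hC1 j j₁ hne with ⟨i, _, hi⟩ | ⟨h, _⟩ | ⟨h, _⟩
      · rw [hSj₁] at hi; exact hi (mem_univ i)
      · tauto
      · tauto
  -- each of the two classes has at most one element
  have hSTF : ∀ j, t1 j → ¬ t2 j → S j = P1ᶜ := by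
    intro j h1 h2
    apply Finset.Subset.antisymm
    · intro i hi
      rw [Finset.mem_compl]
      intro hP
      exact hTF_upper j h1 h2 i hi ((hPP i).1 hP)
    · intro i hi
      rw [Finset.mem_compl] at hi
      exact hTF_lower j h1 h2 i hi
  have hSFT : ∀ j, ¬ t1 j → t2 j → S j = P1ᶜ := by
    intro j h1 h2
    apply Finset.Subset.antisymm
    · intro i hi
      rw [Finset.mem_compl]
      exact hFT_upper j h1 h2 i hi
    · intro i hi
      rw [Finset.mem_compl] at hi
      exact hFT_lower j h1 h2 i (fun hP => hi ((hPP i).2 hP))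
  have huniq : ∀ j j', j ≠ j' → ¬ (t1 j ↔ t1 j') := by
    intro j j' hne hiff
    have hSj : S j = P1ᶜ := by
      rcases hclass j with ⟨h1, h2⟩ | ⟨h1, h2⟩
      exacts [hSTF j h1 h2, hSFT j h1 h2]
    have hSj' : S j' = P1ᶜ := by
      rcases hclass j' with ⟨h1, h2⟩ | ⟨h1, h2⟩
      exacts [hSTF j' h1 h2, hSFT j' h1 h2]
    have ht2 : t2 j ↔ t2 j' := by
      rcases hclass j with ⟨h1, h2⟩ | ⟨h1, h2⟩ <;> rcases hclass j' with ⟨h1', h2'⟩ | ⟨h1', h2'⟩ <;>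
        tauto
    rcases hC1 j j' hne with ⟨i, hi, hi'⟩ | ⟨h, h'⟩ | ⟨h, h'⟩
    · rw [hSj] at hi; rw [hSj'] at hi'; exact hi' hi
    · tauto
    · tauto
  -- q ≤ 2
  have hq2 : q ≤ 2 := by
    by_contra hq
    push_neg at hq
    -- three distinct elements of Fin q, two must share t1 value
    have h3 : 3 ≤ q := hq
    have e0 : (⟨0, by omega⟩ : Fin q) ≠ ⟨1, by omega⟩ := by simp [Fin.ext_iff]
    have e1 : (⟨0, by omega⟩ : Fin q) ≠ ⟨2, by omega⟩ := by simp [Fin.ext_iff]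
    have e2 : (⟨1, by omega⟩ : Fin q) ≠ ⟨2, by omega⟩ := by simp [Fin.ext_iff]
    have v0 := huniq _ _ e0
    have v1 := huniq _ _ e1
    have v2 := huniq _ _ e2
    tauto
  have h2C : 2 ≤ p.choose (p / 2) := by
    have := central_choose_mono hp
    simpa using this
  omega

section Extract
variable {p q : ℕ}

abbrev Vt (p q : ℕ) := Σ i : Fin 3, Fin (![2, p, q] i)
def va (p q : ℕ) (x : Fin 2) : Vt p q := ⟨0, x⟩
def vb (p q : ℕ) (i : Fin p) : Vt p q := ⟨1, i⟩
def vc (p q : ℕ) (j : Fin q) : Vt p q := ⟨2, j⟩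

lemma vcases (v : Vt p q) : (∃ x, v = va p q x) ∨ (∃ i, v = vb p q i) ∨ (∃ j, v = vc p q j) := by
  obtain ⟨i, x⟩ := v
  fin_cases i
  · exact Or.inl ⟨x, rfl⟩
  · exact Or.inr (Or.inl ⟨x, rfl⟩)
  · exact Or.inr (Or.inr ⟨x, rfl⟩)

variable {D : Vt p q → Vt p q → Prop} (hor : IsOrientation (Ktri 2 p q) D)

lemma adj_iff (u v : Vt p q) : (Ktri 2 p q).Adj u v ↔ u.1 ≠ v.1 := Iff.rfl

include hor in
lemma no_arc_same (u v : Vt p q) (h : u.1 = v.1) : ¬ D u v :=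
  fun hD => ((adj_iff u v).1 (hor.1 u v hD)) h

include hor in
lemma flip_arc {u v : Vt p q} (h : u.1 ≠ v.1) (hD : ¬ D u v) : D v u := by
  have hadj : (Ktri 2 p q).Adj v u := (adj_iff v u).2 (Ne.symm h)
  by_contra hvu
  exact hD ((hor.2 u v ((adj_iff u v).2 h)).2 hvu)

include hor in
lemma arc_asymm {u v : Vt p q} (hD : D u v) : ¬ D v u := (hor.2 u v (hor.1 u v hD)).1 hD

lemma vc_inj {j j' : Fin q} (h : vc p q j = vc p q j') : j = j' := by
  exact eq_of_heq (Sigma.mk.inj_iff.1 h).2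


include hor in
lemma forward_bound (hp : 2 ≤ p) (hdd : ∀ u v : Vt p q, ddist D u v ≤ 2) :
    q ≤ p.choose (p / 2) := by
  classical
  set P1 : Finset (Fin p) := Finset.univ.filter (fun i => D (va p q 0) (vb p q i)) with hP1
  set P2 : Finset (Fin p) := Finset.univ.filter (fun i => D (va p q 1) (vb p q i)) with hP2
  set t1 : Fin q → Prop := fun j => D (vc p q j) (va p q 0) with ht1
  set t2 : Fin q → Prop := fun j => D (vc p q j) (va p q 1) with ht2
  set S : Fin q → Finset (Fin p) :=
    fun j => Finset.univ.filter (fun i => D (vc p q j) (vb p q i)) with hS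
  have hmemS : ∀ j i, i ∈ S j ↔ D (vc p q j) (vb p q i) := by
    intro j i; simp [hS]
  have hmemP1 : ∀ i, i ∈ P1 ↔ D (va p q 0) (vb p q i) := by
    intro i; simp [hP1]
  have hmemP2 : ∀ i, i ∈ P2 ↔ D (va p q 1) (vb p q i) := by
    intro i; simp [hP2]
  apply combin_main p q hp P1 P2 t1 t2 S
  · -- C1
    intro j j' hne
    rcases step_of_ddist_le_two (hdd (vc p q j) (vc p q j')) with h | h | ⟨w, h1, h2⟩
    · exact absurd (vc_inj h) hne
    · exact absurd h (no_arc_same hor _ _ rfl)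
    · rcases vcases w with ⟨x, rfl⟩ | ⟨i, rfl⟩ | ⟨j'', rfl⟩
      · fin_cases x
        · exact Or.inr (Or.inl ⟨h1, arc_asymm hor h2⟩)
        · exact Or.inr (Or.inr ⟨h1, arc_asymm hor h2⟩)
      · exact Or.inl ⟨i, (hmemS j i).2 h1, fun hm => arc_asymm hor h2 ((hmemS j' i).1 hm)⟩
      · exact absurd h2 (no_arc_same hor _ _ rfl)
  · -- C2a : t1 j → ∃ i ∈ P1, i ∉ S j
    intro j ht
    rcases step_of_ddist_le_two (hdd (va p q 0) (vc p q j)) with h | h | ⟨w, h1, h2⟩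
    · exact absurd (congrArg Sigma.fst h) (by simp [va, vb, vc])
    · exact absurd ht (arc_asymm hor h)
    · rcases vcases w with ⟨x, rfl⟩ | ⟨i, rfl⟩ | ⟨j'', rfl⟩
      · exact absurd h1 (no_arc_same hor _ _ rfl)
      · exact ⟨i, (hmemP1 i).2 h1, fun hm => arc_asymm hor h2 ((hmemS j i).1 hm)⟩
      · exact absurd h2 (no_arc_same hor _ _ rfl)
  · -- C2b
    intro j ht
    rcases step_of_ddist_le_two (hdd (va p q 1) (vc p q j)) with h | h | ⟨w, h1, h2⟩
    · exact absurd (congrArg Sigma.fst h) (by simp [va, vb, vc])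
    · exact absurd ht (arc_asymm hor h)
    · rcases vcases w with ⟨x, rfl⟩ | ⟨i, rfl⟩ | ⟨j'', rfl⟩
      · exact absurd h1 (no_arc_same hor _ _ rfl)
      · exact ⟨i, (hmemP2 i).2 h1, fun hm => arc_asymm hor h2 ((hmemS j i).1 hm)⟩
      · exact absurd h2 (no_arc_same hor _ _ rfl)
  · -- C3a : ¬ t1 j → ∃ i ∈ S j, i ∉ P1
    intro j ht
    rcases step_of_ddist_le_two (hdd (vc p q j) (va p q 0)) with h | h | ⟨w, h1, h2⟩
    · exact absurd (congrArg Sigma.fst h) (by simp [va, vb, vc])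
    · exact absurd h ht
    · rcases vcases w with ⟨x, rfl⟩ | ⟨i, rfl⟩ | ⟨j'', rfl⟩
      · exact absurd h2 (no_arc_same hor _ _ rfl)
      · exact ⟨i, (hmemS j i).2 h1, fun hm => arc_asymm hor h2 ((hmemP1 i).1 hm)⟩
      · exact absurd h1 (no_arc_same hor _ _ rfl)
  · -- C3b
    intro j ht
    rcases step_of_ddist_le_two (hdd (vc p q j) (va p q 1)) with h | h | ⟨w, h1, h2⟩
    · exact absurd (congrArg Sigma.fst h) (by simp [va, vb, vc])
    · exact absurd h ht
    · rcases vcases w with ⟨x, rfl⟩ | ⟨i, rfl⟩ | ⟨j'', rfl⟩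
      · exact absurd h2 (no_arc_same hor _ _ rfl)
      · exact ⟨i, (hmemS j i).2 h1, fun hm => arc_asymm hor h2 ((hmemP2 i).1 hm)⟩
      · exact absurd h1 (no_arc_same hor _ _ rfl)
  · -- C9
    intro j i hiS
    have hD : D (vc p q j) (vb p q i) := (hmemS j i).1 hiS
    rcases step_of_ddist_le_two (hdd (vb p q i) (vc p q j)) with h | h | ⟨w, h1, h2⟩
    · exact absurd (congrArg Sigma.fst h) (by simp [va, vb, vc])
    · exact absurd h (arc_asymm hor hD)
    · rcases vcases w with ⟨x, rfl⟩ | ⟨i', rfl⟩ | ⟨j'', rfl⟩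
      · fin_cases x
        · exact Or.inl ⟨arc_asymm hor h2, fun hm => arc_asymm hor h1 ((hmemP1 i).1 hm)⟩
        · exact Or.inr ⟨arc_asymm hor h2, fun hm => arc_asymm hor h1 ((hmemP2 i).1 hm)⟩
      · exact absurd h1 (no_arc_same hor _ _ rfl)
      · exact absurd h2 (no_arc_same hor _ _ rfl)
  · -- C10
    intro j i hiS
    have hD : ¬ D (vc p q j) (vb p q i) := fun h => hiS ((hmemS j i).2 h)
    rcases step_of_ddist_le_two (hdd (vc p q j) (vb p q i)) with h | h | ⟨w, h1, h2⟩
    · exact absurd (congrArg Sigma.fst h) (by simp [va, vb, vc])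
    · exact absurd h hD
    · rcases vcases w with ⟨x, rfl⟩ | ⟨i', rfl⟩ | ⟨j'', rfl⟩
      · fin_cases x
        · exact Or.inl ⟨h1, (hmemP1 i).2 h2⟩
        · exact Or.inr ⟨h1, (hmemP2 i).2 h2⟩
      · exact absurd h2 (no_arc_same hor _ _ rfl)
      · exact absurd h1 (no_arc_same hor _ _ rfl)

end Extract

section Intervals
variable {p : ℕ} [NeZero p]
open Fin.NatCast Fin.CommRing

def cInt (k : ℕ) (j : Fin p) : Finset (Fin p) :=
  Finset.univ.filter (fun i => (i - j).val < k)

omit [NeZero p] in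
lemma mem_cInt {k : ℕ} {j i : Fin p} : i ∈ cInt k j ↔ (i - j).val < k := by
  simp [cInt]

omit [NeZero p] in
lemma fin_sub_val (a b : Fin p) :
    (a - b).val = if b.val ≤ a.val then a.val - b.val else a.val + p - b.val := by
  rw [Fin.sub_def]
  have ha := a.isLt
  have hb := b.isLt
  split_ifs with h
  · show (p - b.val + a.val) % p = a.val - b.val
    have e : p - b.val + a.val = (a.val - b.val) + 1 * p := by omega
    rw [e, Nat.add_mul_mod_self_right, Nat.mod_eq_of_lt (by omega)]
  · show (p - b.val + a.val) % p = a.val + p - b.val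
    have e : p - b.val + a.val = a.val + p - b.val := by omega
    rw [e]
    exact Nat.mod_eq_of_lt (by omega)

lemma card_cInt {k : ℕ} (hk : k ≤ p) (j : Fin p) : (cInt k j).card = k := by
  classical
  have himg : cInt k j
      = (Finset.univ.filter (fun t : Fin p => t.val < k)).image (fun t => j + t) := by
    ext i
    simp only [mem_cInt, Finset.mem_image, Finset.mem_filter, Finset.mem_univ, true_and]
    constructor
    · intro h
      exact ⟨i - j, h, by ring⟩
    · rintro ⟨t, ht, rfl⟩
      simpa using ht
  rw [himg, Finset.card_image_of_injective _ (add_right_injective j)]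
  have e2 : Finset.univ.filter (fun t : Fin p => t.val < k)
      = (Finset.range k).attachFin (fun m hm => lt_of_lt_of_le (Finset.mem_range.1 hm) hk) := by
    ext t
    simp [Finset.mem_attachFin]
  rw [e2, Finset.card_attachFin, Finset.card_range]

lemma self_mem_cInt {k : ℕ} (hk : 1 ≤ k) (j : Fin p) : j ∈ cInt k j := by
  rw [mem_cInt]
  simp only [sub_self, Fin.val_zero]
  omega

lemma cInt_injective {k : ℕ} (hk : 1 ≤ k) (h2k : 2 * k ≤ p) :
    Function.Injective (cInt (p := p) k) := by
  intro j j' h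
  by_contra hne
  have h1 : j ∈ cInt k j' := h ▸ self_mem_cInt hk j
  have h2 : j' ∈ cInt k j := h.symm ▸ self_mem_cInt hk j'
  rw [mem_cInt] at h1 h2
  rw [fin_sub_val] at h1 h2
  have hjv : j.val ≠ j'.val := fun hv => hne (Fin.ext hv)
  have := j.isLt
  have := j'.isLt
  split_ifs at h1 h2 <;> omega

/-- separation: for i ≠ i' there is an interval containing i' but not i -/
lemma cInt_sep {k : ℕ} (hk : 1 ≤ k) (h2k : 2 * k ≤ p) {i i' : Fin p} (h : i ≠ i') :
    ∃ j : Fin p, i' ∈ cInt k j ∧ i ∉ cInt k j := by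
  have hd : (i - i').val ≠ 0 := by
    intro h0
    apply h
    have : i - i' = 0 := Fin.ext (by simpa using h0)
    have := sub_eq_zero.1 this
    exact this
  by_cases hcase : k ≤ (i - i').val
  · refine ⟨i', ?_, ?_⟩
    · exact self_mem_cInt hk i'
    · rw [mem_cInt]; omega
  · -- d := (i - i').val < k, use j = i' - (k-1)
    push_neg at hcase
    have hp2 : 2 ≤ p := by omega
    refine ⟨i' - ((k - 1 : ℕ) : Fin p), ?_, ?_⟩
    · rw [mem_cInt]
      have e : i' - (i' - ((k - 1 : ℕ) : Fin p)) = ((k - 1 : ℕ) : Fin p) := by ring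
      rw [e, Fin.val_cast_of_lt (by omega)]
      omega
    · rw [mem_cInt]
      have e : i - (i' - ((k - 1 : ℕ) : Fin p)) = (i - i') + ((k - 1 : ℕ) : Fin p) := by ring
      rw [e, Fin.val_add, Fin.val_cast_of_lt (by omega)]
      have hle : (i - i').val + (k - 1) < p := by omega
      rw [Nat.mod_eq_of_lt hle]
      omega

end Intervals

lemma exists_family (p q : ℕ) (hp : 2 ≤ p) (hpq : p ≤ q) (hq : q ≤ p.choose (p / 2)) :
    ∃ f : Fin q → Finset (Fin p),
      (∀ j, (f j).card = p / 2) ∧ Function.Injective f ∧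
      (∀ i i' : Fin p, i ≠ i' → ∃ j, i' ∈ f j ∧ i ∉ f j) := by
  classical
  haveI : NeZero p := ⟨by omega⟩
  set k := p / 2 with hkdef
  have hk : 1 ≤ k := by omega
  have h2k : 2 * k ≤ p := by omega
  set A := Finset.powersetCard k (Finset.univ : Finset (Fin p)) with hA
  have hAcard : A.card = p.choose k := by
    rw [hA, Finset.card_powersetCard, Finset.card_univ, Fintype.card_fin]
  set img := Finset.univ.image (cInt (p := p) k) with himg
  have himg_card : img.card = p := by
    rw [himg, Finset.card_image_of_injective _ (cInt_injective hk h2k), Finset.card_univ,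
      Fintype.card_fin]
  have himg_sub : img ⊆ A := by
    intro s hs
    rw [himg, Finset.mem_image] at hs
    obtain ⟨j, _, rfl⟩ := hs
    rw [hA, Finset.mem_powersetCard]
    exact ⟨Finset.subset_univ _, card_cInt (by omega) j⟩
  set B := A \ img with hB
  have hBcard : B.card = p.choose k - p := by
    rw [hB, Finset.card_sdiff_of_subset himg_sub, hAcard, himg_card]
  have hqp : q - p ≤ B.card := by omega
  obtain ⟨B', hB'sub, hB'card⟩ := Finset.exists_subset_card_eq hqp
  set e := B'.equivFinOfCardEq hB'card with he
  set f : Fin q → Finset (Fin p) := fun j =>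
    if h : j.val < p then cInt k ⟨j.val, h⟩ else (e.symm ⟨j.val - p, by omega⟩ : B') with hf
  have hfI : ∀ (j : Fin q) (h : j.val < p), f j = cInt k ⟨j.val, h⟩ := by
    intro j h; rw [hf]; simp [h]
  have hfB : ∀ (j : Fin q) (h : ¬ j.val < p), (f j : Finset (Fin p)) ∈ B := by
    intro j h
    rw [hf]
    simp only [h, dif_neg, not_false_iff]
    exact hB'sub (e.symm ⟨j.val - p, by omega⟩).2
  refine ⟨f, ?_, ?_, ?_⟩
  · intro j
    by_cases h : j.val < p
    · rw [hfI j h]; exact card_cInt (by omega) _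
    · have := hfB j h
      rw [hB, Finset.mem_sdiff, hA, Finset.mem_powersetCard] at this
      exact this.1.2
  · intro j j' hff
    by_cases h : j.val < p <;> by_cases h' : j'.val < p
    · rw [hfI j h, hfI j' h'] at hff
      have := cInt_injective hk h2k hff
      exact Fin.ext (by simpa [Fin.ext_iff] using this)
    · exfalso
      have hmem := hfB j' h'
      rw [hB, Finset.mem_sdiff] at hmem
      apply hmem.2
      rw [← hff, hfI j h, himg, Finset.mem_image]
      exact ⟨⟨j.val, h⟩, Finset.mem_univ _, rfl⟩
    · exfalso
      have hmem := hfB j h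
      rw [hB, Finset.mem_sdiff] at hmem
      apply hmem.2
      rw [hff, hfI j' h', himg, Finset.mem_image]
      exact ⟨⟨j'.val, h'⟩, Finset.mem_univ _, rfl⟩
    · rw [hf] at hff
      simp only [h, h', dif_neg, not_false_iff] at hff
      have h2 := e.symm.injective (Subtype.ext hff)
      have h3 : j.val - p = j'.val - p := by
        simpa [Fin.ext_iff] using congrArg Fin.val h2
      exact Fin.ext (by omega)
  · intro i i' hne
    obtain ⟨j₀, hmem, hnmem⟩ := cInt_sep hk h2k hne
    refine ⟨⟨j₀.val, lt_of_lt_of_le j₀.isLt hpq⟩, ?_, ?_⟩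
    · rw [hfI _ j₀.isLt]
      simpa [Fin.eta] using hmem
    · rw [hfI _ j₀.isLt]
      simpa [Fin.eta] using hnmem

-- the constructed orientation
def memf (p q : ℕ) (f : Fin q → Finset (Fin p)) (j i : ℕ) : Prop :=
  ∃ (hj : j < q) (hi : i < p), (⟨i, hi⟩ : Fin p) ∈ f ⟨j, hj⟩

def Dor (p q : ℕ) (f : Fin q → Finset (Fin p)) : Vt p q → Vt p q → Prop := fun u v =>
  (u.1.val = 0 ∧ v.1.val = 1 ∧ u.2.val = 0) ∨
  (u.1.val = 1 ∧ v.1.val = 0 ∧ v.2.val = 1) ∨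
  (u.1.val = 0 ∧ v.1.val = 2 ∧ u.2.val = 1) ∨
  (u.1.val = 2 ∧ v.1.val = 0 ∧ v.2.val = 0) ∨
  (u.1.val = 2 ∧ v.1.val = 1 ∧ memf p q f u.2.val v.2.val) ∨
  (u.1.val = 1 ∧ v.1.val = 2 ∧ ¬ memf p q f v.2.val u.2.val)

variable {f : Fin q → Finset (Fin p)}

lemma memf_iff (j : Fin q) (i : Fin p) : memf p q f j.val i.val ↔ i ∈ f j := by
  constructor
  · rintro ⟨hj, hi, hm⟩; simpa [Fin.eta] using hm
  · intro hm; exact ⟨j.isLt, i.isLt, by simpa [Fin.eta] using hm⟩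

lemma Dor_aa {x y : Fin 2} : Dor p q f (va p q x) (va p q y) ↔ False := by
  simp [Dor, va]
lemma Dor_bb {i i' : Fin p} : Dor p q f (vb p q i) (vb p q i') ↔ False := by
  simp [Dor, vb]
lemma Dor_cc {j j' : Fin q} : Dor p q f (vc p q j) (vc p q j') ↔ False := by
  simp [Dor, vc]
lemma Dor_ab {x : Fin 2} {i : Fin p} : Dor p q f (va p q x) (vb p q i) ↔ x.val = 0 := by
  simp [Dor, va, vb]
lemma Dor_ba {x : Fin 2} {i : Fin p} : Dor p q f (vb p q i) (va p q x) ↔ x.val = 1 := by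
  simp [Dor, va, vb]
lemma Dor_ac {x : Fin 2} {j : Fin q} : Dor p q f (va p q x) (vc p q j) ↔ x.val = 1 := by
  simp [Dor, va, vc]
lemma Dor_ca {x : Fin 2} {j : Fin q} : Dor p q f (vc p q j) (va p q x) ↔ x.val = 0 := by
  simp [Dor, va, vc]
lemma Dor_cb {j : Fin q} {i : Fin p} : Dor p q f (vc p q j) (vb p q i) ↔ i ∈ f j := by
  rw [show (i ∈ f j) = memf p q f j.val i.val from (propext (memf_iff j i)).symm]
  simp [Dor, vb, vc]
lemma Dor_bc {j : Fin q} {i : Fin p} : Dor p q f (vb p q i) (vc p q j) ↔ i ∉ f j := by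
  rw [show (i ∈ f j) = memf p q f j.val i.val from (propext (memf_iff j i)).symm]
  simp [Dor, vb, vc]

lemma Dor_orientation : IsOrientation (Ktri 2 p q) (Dor p q f) := by
  constructor
  · intro u v hD heq
    rcases hD with ⟨h1, h2, _⟩ | ⟨h1, h2, _⟩ | ⟨h1, h2, _⟩ | ⟨h1, h2, _⟩ | ⟨h1, h2, _⟩ |
      ⟨h1, h2, _⟩ <;> rw [heq] at h1 <;> omega
  · intro u v hadj
    rcases vcases u with ⟨x, rfl⟩ | ⟨i, rfl⟩ | ⟨j, rfl⟩ <;>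
      rcases vcases v with ⟨y, rfl⟩ | ⟨i', rfl⟩ | ⟨j', rfl⟩
    · exact absurd rfl hadj
    · rw [Dor_ab, Dor_ba]; have := x.isLt; omega
    · rw [Dor_ac, Dor_ca]; have := x.isLt; omega
    · rw [Dor_ba, Dor_ab]; have := y.isLt; omega
    · exact absurd rfl hadj
    · rw [Dor_bc, Dor_cb]
    · rw [Dor_ca, Dor_ac]; have := y.isLt; omega
    · rw [Dor_cb, Dor_bc]; tauto
    · exact absurd rfl hadj

lemma Dor_step (hp : 2 ≤ p) (hpq : p ≤ q)
    (hcard : ∀ j, (f j).card = p / 2) (hinj : Function.Injective f)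
    (hsep : ∀ i i' : Fin p, i ≠ i' → ∃ j, i' ∈ f j ∧ i ∉ f j) (u v : Vt p q) :
    u = v ∨ Dor p q f u v ∨ ∃ w, Dor p q f u w ∧ Dor p q f w v := by
  have hq2 : 0 < q := by omega
  have hfmem : ∀ i : Fin p, ∃ j, i ∈ f j := by
    intro i
    have h2 : ∃ i'' : Fin p, i'' ≠ i := by
      rcases Nat.eq_zero_or_pos i.val with h | h
      · exact ⟨⟨1, by omega⟩, by simp only [ne_eq, Fin.ext_iff]; omega⟩
      · exact ⟨⟨0, by omega⟩, by simp only [ne_eq, Fin.ext_iff]; omega⟩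
    obtain ⟨i'', hne⟩ := h2
    obtain ⟨j, hj, _⟩ := hsep i'' i hne
    exact ⟨j, hj⟩
  have hfnotmem : ∀ i : Fin p, ∃ j, i ∉ f j := by
    intro i
    have h2 : ∃ i'' : Fin p, i ≠ i'' := by
      rcases Nat.eq_zero_or_pos i.val with h | h
      · exact ⟨⟨1, by omega⟩, by simp only [ne_eq, Fin.ext_iff]; omega⟩
      · exact ⟨⟨0, by omega⟩, by simp only [ne_eq, Fin.ext_iff]; omega⟩
    obtain ⟨i'', hne⟩ := h2
    obtain ⟨j, _, hj⟩ := hsep i i'' hne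
    exact ⟨j, hj⟩
  have hfne : ∀ j, ∃ i, i ∈ f j := by
    intro j
    have := hcard j
    have hpos : 0 < (f j).card := by omega
    obtain ⟨i, hi⟩ := Finset.card_pos.1 hpos
    exact ⟨i, hi⟩
  have hfpr : ∀ j, ∃ i, i ∉ f j := by
    intro j
    by_contra hc
    push_neg at hc
    have : (Finset.univ : Finset (Fin p)) ⊆ f j := fun i _ => hc i
    have h1 := Finset.card_le_card this
    rw [Finset.card_univ, Fintype.card_fin, hcard j] at h1
    omega
  have hdiff : ∀ j j' : Fin q, j ≠ j' → ∃ i, i ∈ f j ∧ i ∉ f j' := by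
    intro j j' hne
    by_contra hc
    push_neg at hc
    have hsub : f j ⊆ f j' := fun i hi => hc i hi
    have : f j = f j' := Finset.eq_of_subset_of_card_le hsub (by rw [hcard, hcard])
    exact hne (hinj this)
  rcases vcases u with ⟨x, rfl⟩ | ⟨i, rfl⟩ | ⟨j, rfl⟩ <;>
    rcases vcases v with ⟨y, rfl⟩ | ⟨i', rfl⟩ | ⟨j', rfl⟩
  · -- a a
    by_cases hxy : x = y
    · exact Or.inl (by rw [hxy])
    · have hx := x.isLt
      have hy := y.isLt
      rcases Nat.eq_zero_or_pos x.val with h0 | h1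
      · have hy1 : y.val = 1 := by
          rcases Nat.eq_zero_or_pos y.val with h | h
          · exact absurd (Fin.ext (by omega)) hxy
          · omega
        exact Or.inr (Or.inr ⟨vb p q ⟨0, by omega⟩, Dor_ab.2 h0, Dor_ba.2 hy1⟩)
      · have hx1 : x.val = 1 := by omega
        have hy0 : y.val = 0 := by
          rcases Nat.eq_zero_or_pos y.val with h | h
          · exact h
          · exact absurd (Fin.ext (by omega)) hxy
        exact Or.inr (Or.inr ⟨vc p q ⟨0, hq2⟩, Dor_ac.2 hx1, Dor_ca.2 hy0⟩)
  · -- a b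
    have hx := x.isLt
    rcases Nat.eq_zero_or_pos x.val with h0 | h1
    · exact Or.inr (Or.inl (Dor_ab.2 h0))
    · obtain ⟨j, hj⟩ := hfmem i'
      exact Or.inr (Or.inr ⟨vc p q j, Dor_ac.2 (by omega), Dor_cb.2 hj⟩)
  · -- a c
    have hx := x.isLt
    rcases Nat.eq_zero_or_pos x.val with h0 | h1
    · obtain ⟨i, hi⟩ := hfpr j'
      exact Or.inr (Or.inr ⟨vb p q i, Dor_ab.2 h0, Dor_bc.2 hi⟩)
    · exact Or.inr (Or.inl (Dor_ac.2 (by omega)))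
  · -- b a
    have hy := y.isLt
    rcases Nat.eq_zero_or_pos y.val with h0 | h1
    · obtain ⟨j, hj⟩ := hfnotmem i
      exact Or.inr (Or.inr ⟨vc p q j, Dor_bc.2 hj, Dor_ca.2 h0⟩)
    · exact Or.inr (Or.inl (Dor_ba.2 (by omega)))
  · -- b b
    by_cases hii : i = i'
    · exact Or.inl (by rw [hii])
    · obtain ⟨j, h1, h2⟩ := hsep i i' hii
      exact Or.inr (Or.inr ⟨vc p q j, Dor_bc.2 h2, Dor_cb.2 h1⟩)
  · -- b c : via a_1
    exact Or.inr (Or.inr ⟨va p q 1, Dor_ba.2 rfl, Dor_ac.2 rfl⟩)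
  · -- c a
    have hy := y.isLt
    rcases Nat.eq_zero_or_pos y.val with h0 | h1
    · exact Or.inr (Or.inl (Dor_ca.2 h0))
    · obtain ⟨i, hi⟩ := hfne j
      exact Or.inr (Or.inr ⟨vb p q i, Dor_cb.2 hi, Dor_ba.2 (by omega)⟩)
  · -- c b : via a_0
    exact Or.inr (Or.inr ⟨va p q 0, Dor_ca.2 rfl, Dor_ab.2 rfl⟩)
  · -- c c
    by_cases hjj : j = j'
    · exact Or.inl (by rw [hjj])
    · obtain ⟨i, h1, h2⟩ := hdiff j j' hjj
      exact Or.inr (Or.inr ⟨vb p q i, Dor_cb.2 h1, Dor_bc.2 h2⟩)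

lemma va_ne : va p q 0 ≠ va p q 1 := by
  intro h
  have := congrArg (fun v : Vt p q => v.2.val) h
  simpa [va] using this

lemma va_nadj : ¬ (Ktri 2 p q).Adj (va p q 0) (va p q 1) := fun h => h rfl

lemma two_le_mem_orientSet {n : ℕ∞}
    (hn : ∃ D : Vt p q → Vt p q → Prop,
      IsOrientation (Ktri 2 p q) D ∧ IsStrong D ∧ ddiam (Vt p q) D = n) : 2 ≤ n := by
  obtain ⟨D, hor, _, rfl⟩ := hn
  exact le_trans (two_le_ddist hor va_ne va_nadj) ddist_le_ddiam


/-- For `q ≥ p ≥ 2`, the orientation number of `K(2,p,q)` is 2 iff `q ≤ C(p, ⌊p/2⌋)`. -/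
theorem K2pq_orientation_number_eq_two_iff (p q : ℕ) (hp : 2 ≤ p) (hpq : p ≤ q) :
    orientationNumber (Ktri 2 p q) = 2 ↔ q ≤ p.choose (p / 2) := by

  constructor
  · intro h2
    rw [orientationNumber] at h2
    have hlt : sInf {n : ℕ∞ | ∃ D : Vt p q → Vt p q → Prop,
        IsOrientation (Ktri 2 p q) D ∧ IsStrong D ∧ ddiam (Vt p q) D = n} < 3 := by
      rw [h2]; norm_num
    rw [sInf_lt_iff] at hlt
    obtain ⟨n, hn, hnlt⟩ := hlt
    obtain ⟨D, hor, hstr, hdd⟩ := hn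
    have hn2 : n ≤ 2 := by
      by_contra hc
      push_neg at hc
      have h3 : (2 : ℕ∞) + 1 ≤ n := ENat.add_one_le_iff (by norm_num) |>.2 hc
      norm_num at h3
      exact absurd hnlt (not_lt.2 h3)
    have hddle : ∀ u v : Vt p q, ddist D u v ≤ 2 :=
      fun u v => le_trans ddist_le_ddiam (le_trans (le_of_eq hdd) hn2)
    exact forward_bound hor hp hddle
  · intro hqle
    obtain ⟨f, hcard, hinj, hsep⟩ := exists_family p q hp hpq hqle
    have hstep := Dor_step (f := f) hp hpq hcard hinj hsep
    have hddle : ∀ u v : Vt p q, ddist (Dor p q f) u v ≤ 2 :=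
      fun u v => ddist_le_two_of_step (hstep u v)
    have hstrong : IsStrong (Dor p q f) := by
      intro u v
      obtain ⟨m, _, hm⟩ := exists_hasPath_of_ddist_le (hddle u v)
      exact ⟨m, hm⟩
    have hdd2 : ddiam (Vt p q) (Dor p q f) = 2 := by
      refine le_antisymm (ddiam_le hddle) ?_
      exact le_trans (two_le_ddist Dor_orientation va_ne va_nadj) ddist_le_ddiam
    rw [orientationNumber]
    refine le_antisymm (sInf_le ⟨Dor p q f, Dor_orientation, hstrong, hdd2⟩) ?_
    exact le_sInf fun n hn => two_le_mem_orientSet hn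
end

section
/- Let p = kd with integers k, d satisfying 1 < k, d < p. Then C(2p,p) = Σ_{i=0}^{d} Σ_{j=0}^{d} Φ(p,d,[i,j]). -/
open Finset

/-- `Φ*(p,d)` (for `p = k·d`): the sum over tuples `(x_1,…,x_{2d})` with `Σ x_i = p` and
`1 ≤ x_i ≤ k−1` of `Π C(k, x_i)`. -/
def PhiStar (k d p : ℕ) : ℕ :=
  ∑ x ∈ (Finset.Nat.antidiagonalTuple (2 * d) p).filter
      (fun x => ∀ i, 1 ≤ x i ∧ x i ≤ k - 1),
    ∏ i, k.choose (x i)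

/-- `Φ(p,d,[i,j])` (for `p = k·d`): sum over disjoint index sets `S, T` of sizes `i, j`
and tuples summing to `p` with `x_r = 0` on `S`, `x_r = k` on `T` and `1 ≤ x_r ≤ k−1`
otherwise, of `Π C(k, x_r)`. -/
def Phi (k d p i j : ℕ) : ℕ :=
  ∑ S ∈ (Finset.univ : Finset (Fin (2 * d))).powersetCard i,
    ∑ T ∈ ((Finset.univ : Finset (Fin (2 * d))) \ S).powersetCard j,
      ∑ x ∈ (Finset.Nat.antidiagonalTuple (2 * d) p).filter
          (fun x => (∀ r ∈ S, x r = 0) ∧ (∀ r ∈ T, x r = k) ∧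
            ∀ r, r ∉ S → r ∉ T → 1 ≤ x r ∧ x r ≤ k - 1),
        ∏ r, k.choose (x r)



/- ### Auxiliary machinery -/

lemma sum_AT_choose (k : ℕ) : ∀ n m : ℕ,
    (∑ x ∈ Finset.Nat.antidiagonalTuple n m, ∏ i, k.choose (x i)) = (n * k).choose m := by
  intro n
  induction n with
  | zero =>
    intro m
    cases m with
    | zero => simp
    | succ m => simp [Finset.Nat.antidiagonalTuple_zero_succ]
  | succ n ih =>
    intro m
    have h1 : (∑ x ∈ Finset.Nat.antidiagonalTuple (n + 1) m, ∏ i, k.choose (x i))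
        = ∑ p ∈ Finset.HasAntidiagonal.antidiagonal m, ∑ y ∈ Finset.Nat.antidiagonalTuple n p.2,
            k.choose p.1 * ∏ i, k.choose (y i) := by
      rw [Finset.sum_sigma']
      refine Finset.sum_nbij' (fun (x : Fin (n + 1) → ℕ) => ⟨(x 0, ∑ i : Fin n, x i.succ), fun (i : Fin n) => x i.succ⟩)
        (fun q => Fin.cons q.1.1 q.2) ?_ ?_ ?_ ?_ ?_
      · intro x hx
        rw [Finset.Nat.mem_antidiagonalTuple] at hx
        simp only [Finset.mem_sigma, Finset.HasAntidiagonal.mem_antidiagonal,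
          Finset.Nat.mem_antidiagonalTuple]
        exact ⟨by rw [← hx, Fin.sum_univ_succ], trivial⟩
      · intro q hq
        simp only [Finset.mem_sigma, Finset.HasAntidiagonal.mem_antidiagonal,
          Finset.Nat.mem_antidiagonalTuple] at hq
        rw [Finset.Nat.mem_antidiagonalTuple, Fin.sum_univ_succ]
        simp [hq.2, hq.1]
      · intro x hx
        exact Fin.cons_self_tail x
      · intro q hq
        simp only [Finset.mem_sigma, Finset.HasAntidiagonal.mem_antidiagonal,
          Finset.Nat.mem_antidiagonalTuple] at hq
        refine Sigma.ext ?_ ?_ <;> simp [hq.2]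
      · intro x hx
        rw [Fin.prod_univ_succ]
    rw [h1]
    have h2 : ∀ p ∈ Finset.HasAntidiagonal.antidiagonal m,
        (∑ y ∈ Finset.Nat.antidiagonalTuple n p.2, k.choose p.1 * ∏ i, k.choose (y i))
          = k.choose p.1 * (n * k).choose p.2 := by
      intro p _
      rw [← Finset.mul_sum, ih]
    rw [Finset.sum_congr rfl h2, show (n + 1) * k = k + n * k by ring, Nat.add_choose_eq]

lemma sum_powerset_card_le {α : Type*} [DecidableEq α] (s : Finset α) (n : ℕ)
    (g : Finset α → ℕ) :
    ∑ i ∈ Finset.range (n + 1), ∑ S ∈ s.powersetCard i, g S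
      = ∑ S ∈ s.powerset.filter (fun S => S.card ≤ n), g S := by
  rw [← Finset.sum_fiberwise_of_maps_to (g := Finset.card)
    (t := Finset.range (n + 1)) (fun S hS => by
      simp only [Finset.mem_filter] at hS
      simp only [Finset.mem_range]
      omega)]
  refine Finset.sum_congr rfl fun i hi => ?_
  refine Finset.sum_congr ?_ fun _ _ => rfl
  rw [Finset.mem_range] at hi
  ext T
  simp only [Finset.mem_filter, Finset.mem_powerset, Finset.mem_powersetCard]
  constructor
  · rintro ⟨h1, h2⟩
    exact ⟨⟨h1, by omega⟩, h2⟩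
  · rintro ⟨⟨h1, _⟩, h2⟩
    exact ⟨h1, h2⟩

/-- zero/k pattern of a tuple. -/
def sigmaFun (k : ℕ) {N : ℕ} (x : Fin N → ℕ) : Finset (Fin N) × Finset (Fin N) :=
  (Finset.univ.filter fun r => x r = 0, Finset.univ.filter fun r => x r = k)

/-- fiber sum -/
def Fib (k N p : ℕ) (S T : Finset (Fin N)) : ℕ :=
  ∑ x ∈ ((Finset.Nat.antidiagonalTuple N p).filter (fun x => ∀ r, x r ≤ k)).filter
      (fun x => sigmaFun k x = (S, T)),
    ∏ r, k.choose (x r)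

lemma fib_key (k d : ℕ) (hk : 1 < k) (S T : Finset (Fin (2 * d)))
    (x : Fin (2 * d) → ℕ) (hx : ∑ r, x r = k * d) (hle : ∀ r, x r ≤ k)
    (hσ : sigmaFun k x = (S, T)) :
    S.card ≤ d ∧ T ⊆ Finset.univ \ S ∧ T.card ≤ d := by
  have e1 : Finset.univ.filter (fun r => x r = 0) = S := congrArg Prod.fst hσ
  have e2 : Finset.univ.filter (fun r => x r = k) = T := congrArg Prod.snd hσ
  have hmemS : ∀ r, r ∈ S ↔ x r = 0 := fun r => by rw [← e1]; simp
  have hmemT : ∀ r, r ∈ T ↔ x r = k := fun r => by rw [← e2]; simp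
  have hTS : T ⊆ Finset.univ \ S := by
    intro r hr
    rw [Finset.mem_sdiff]
    refine ⟨Finset.mem_univ r, fun hrS => ?_⟩
    have h1 := (hmemS r).1 hrS
    have h2 := (hmemT r).1 hr
    omega
  have hTcard : T.card ≤ d := by
    have h1 : k * T.card ≤ k * d := by
      calc k * T.card = ∑ _r ∈ T, k := by rw [Finset.sum_const, smul_eq_mul, mul_comm]
        _ = ∑ r ∈ T, x r := Finset.sum_congr rfl (fun r hr => ((hmemT r).1 hr).symm)
        _ ≤ ∑ r, x r := Finset.sum_le_sum_of_subset (Finset.subset_univ T)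
        _ = k * d := hx
    exact Nat.le_of_mul_le_mul_left h1 (by omega)
  refine ⟨?_, hTS, hTcard⟩
  have hcardc : (Finset.univ \ S).card = 2 * d - S.card := by
    rw [Finset.card_univ_diff, Fintype.card_fin]
  have hSle : S.card ≤ 2 * d := by
    calc S.card ≤ (Finset.univ : Finset (Fin (2 * d))).card :=
          Finset.card_le_card (Finset.subset_univ S)
      _ = 2 * d := by rw [Finset.card_univ, Fintype.card_fin]
  have h2 : k * d ≤ k * (2 * d - S.card) := by
    calc k * d = ∑ r, x r := hx.symm
      _ = ∑ r ∈ Finset.univ \ S, x r :=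
          (Finset.sum_subset (Finset.subset_univ _) (fun r _ hr => by
            refine (hmemS r).1 ?_
            simpa [Finset.mem_sdiff] using hr)).symm
      _ ≤ ∑ _r ∈ Finset.univ \ S, k := Finset.sum_le_sum (fun r _ => hle r)
      _ = k * (2 * d - S.card) := by rw [Finset.sum_const, smul_eq_mul, mul_comm, hcardc]
  have h3 : d ≤ 2 * d - S.card := Nat.le_of_mul_le_mul_left h2 (by omega)
  omega

lemma inner_eq (k d p : ℕ) (hk : 1 < k) (S T : Finset (Fin (2 * d)))
    (hTS : T ⊆ Finset.univ \ S) :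
    (∑ x ∈ (Finset.Nat.antidiagonalTuple (2 * d) p).filter
        (fun x => (∀ r ∈ S, x r = 0) ∧ (∀ r ∈ T, x r = k) ∧
          ∀ r, r ∉ S → r ∉ T → 1 ≤ x r ∧ x r ≤ k - 1),
      ∏ r, k.choose (x r)) = Fib k (2 * d) p S T := by
  unfold Fib
  rw [Finset.filter_filter]
  refine Finset.sum_congr (Finset.filter_congr fun x hx => ?_) fun _ _ => rfl
  have hdisj : ∀ r, r ∈ T → r ∉ S := fun r hr => (Finset.mem_sdiff.mp (hTS hr)).2
  constructor
  · rintro ⟨h0, hkk, hmid⟩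
    have hle : ∀ r, x r ≤ k := by
      intro r
      by_cases h1 : r ∈ S
      · rw [h0 r h1]; omega
      · by_cases h2 : r ∈ T
        · rw [hkk r h2]
        · have := (hmid r h1 h2).2; omega
    refine ⟨hle, ?_⟩
    have e1 : Finset.univ.filter (fun r => x r = 0) = S := by
      ext r
      simp only [Finset.mem_filter, Finset.mem_univ, true_and]
      constructor
      · intro hx0
        by_contra hrS
        by_cases h2 : r ∈ T
        · have := hkk r h2; omega
        · have := (hmid r hrS h2).1; omega
      · exact h0 r
    have e2 : Finset.univ.filter (fun r => x r = k) = T := by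
      ext r
      simp only [Finset.mem_filter, Finset.mem_univ, true_and]
      constructor
      · intro hxk
        by_contra hrT
        by_cases h1 : r ∈ S
        · have := h0 r h1; omega
        · have := (hmid r h1 hrT).2; omega
      · exact hkk r
    show (Finset.univ.filter (fun r => x r = 0), Finset.univ.filter (fun r => x r = k)) = (S, T)
    rw [e1, e2]
  · rintro ⟨hle, hσ⟩
    have e1 : Finset.univ.filter (fun r => x r = 0) = S := congrArg Prod.fst hσ
    have e2 : Finset.univ.filter (fun r => x r = k) = T := congrArg Prod.snd hσ
    have hmemS : ∀ r, r ∈ S ↔ x r = 0 := fun r => by rw [← e1]; simp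
    have hmemT : ∀ r, r ∈ T ↔ x r = k := fun r => by rw [← e2]; simp
    refine ⟨fun r hr => (hmemS r).1 hr, fun r hr => (hmemT r).1 hr, fun r hrS hrT => ?_⟩
    have h1 : x r ≠ 0 := fun h => hrS ((hmemS r).2 h)
    have h2 : x r ≠ k := fun h => hrT ((hmemT r).2 h)
    have := hle r
    omega

/-- `C(2p,p)` decomposes as the sum of all `Φ(p,d,[i,j])`. -/
theorem choose_eq_sum_Phi (k d p : ℕ) (hp : p = k * d) (hk : 1 < k) (hkp : k < p)
    (hd : 1 < d) (hdp : d < p) :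
    (2 * p).choose p =
      ∑ i ∈ Finset.range (d + 1), ∑ j ∈ Finset.range (d + 1), Phi k d p i j := by
  classical
  have hF0 : ∀ S T : Finset (Fin (2 * d)),
      ¬(S.card ≤ d ∧ T ⊆ Finset.univ \ S ∧ T.card ≤ d) → Fib k (2 * d) p S T = 0 := by
    intro S T h
    unfold Fib
    rw [Finset.filter_filter]
    refine Finset.sum_eq_zero fun x hx => ?_
    rw [Finset.mem_filter, Finset.Nat.mem_antidiagonalTuple] at hx
    exact absurd (fib_key k d hk S T x (hx.1.trans hp) hx.2.1 hx.2.2) h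
  have e2 : ∀ i, (∑ j ∈ Finset.range (d + 1), Phi k d p i j)
      = ∑ S ∈ (Finset.univ : Finset (Fin (2 * d))).powersetCard i,
          ∑ T ∈ ((Finset.univ : Finset (Fin (2 * d))) \ S).powerset.filter
              (fun T => T.card ≤ d),
            Fib k (2 * d) p S T := by
    intro i
    simp only [Phi]
    rw [Finset.sum_comm]
    refine Finset.sum_congr rfl fun S hS => ?_
    rw [← sum_powerset_card_le]
    refine Finset.sum_congr rfl fun j hj => Finset.sum_congr rfl fun T hT => ?_
    exact inner_eq k d p hk S T (Finset.mem_powersetCard.mp hT).1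
  have e3 : (∑ i ∈ Finset.range (d + 1), ∑ j ∈ Finset.range (d + 1), Phi k d p i j)
      = ∑ S ∈ (Finset.univ : Finset (Fin (2 * d))).powerset.filter (fun S => S.card ≤ d),
          ∑ T ∈ ((Finset.univ : Finset (Fin (2 * d))) \ S).powerset.filter
              (fun T => T.card ≤ d),
            Fib k (2 * d) p S T := by
    rw [Finset.sum_congr rfl fun i _ => e2 i]
    exact sum_powerset_card_le _ d _
  have L1 : (2 * p).choose p
      = ∑ x ∈ Finset.Nat.antidiagonalTuple (2 * d) p, ∏ r, k.choose (x r) := by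
    rw [show 2 * p = 2 * d * k by rw [hp]; ring]
    exact (sum_AT_choose k (2 * d) p).symm
  have L2 : (∑ x ∈ Finset.Nat.antidiagonalTuple (2 * d) p, ∏ r, k.choose (x r))
      = ∑ x ∈ (Finset.Nat.antidiagonalTuple (2 * d) p).filter (fun x => ∀ r, x r ≤ k),
          ∏ r, k.choose (x r) := by
    symm
    refine Finset.sum_filter_of_ne fun x hx hne r => ?_
    by_contra hgt
    push_neg at hgt
    exact hne (Finset.prod_eq_zero (Finset.mem_univ r) (Nat.choose_eq_zero_of_lt hgt))
  have L3 : (∑ x ∈ (Finset.Nat.antidiagonalTuple (2 * d) p).filter (fun x => ∀ r, x r ≤ k),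
          ∏ r, k.choose (x r))
      = ∑ S : Finset (Fin (2 * d)), ∑ T : Finset (Fin (2 * d)), Fib k (2 * d) p S T := by
    rw [← Finset.sum_fiberwise ((Finset.Nat.antidiagonalTuple (2 * d) p).filter
        (fun x => ∀ r, x r ≤ k)) (sigmaFun k) (fun x => ∏ r, k.choose (x r))]
    rw [Fintype.sum_prod_type]
    rfl
  have step1 : ∀ S : Finset (Fin (2 * d)),
      (∑ T ∈ ((Finset.univ : Finset (Fin (2 * d))) \ S).powerset.filter
          (fun T => T.card ≤ d), Fib k (2 * d) p S T)
        = ∑ T : Finset (Fin (2 * d)), Fib k (2 * d) p S T := by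
    intro S
    refine Finset.sum_subset (Finset.subset_univ _) fun T _ hT => ?_
    refine hF0 S T fun ⟨_, h2, h3⟩ => hT ?_
    rw [Finset.mem_filter, Finset.mem_powerset]
    exact ⟨h2, h3⟩
  have L4 : (∑ S ∈ (Finset.univ : Finset (Fin (2 * d))).powerset.filter
        (fun S => S.card ≤ d),
          ∑ T ∈ ((Finset.univ : Finset (Fin (2 * d))) \ S).powerset.filter
              (fun T => T.card ≤ d),
            Fib k (2 * d) p S T)
      = ∑ S : Finset (Fin (2 * d)), ∑ T : Finset (Fin (2 * d)), Fib k (2 * d) p S T := by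
    rw [Finset.sum_congr rfl fun S _ => step1 S]
    refine Finset.sum_subset (Finset.subset_univ _) fun S _ hS => ?_
    refine Finset.sum_eq_zero fun T _ => hF0 S T fun ⟨h1, _, _⟩ => hS ?_
    rw [Finset.mem_filter, Finset.mem_powerset]
    exact ⟨Finset.subset_univ S, h1⟩
  rw [L1, L2, L3, e3, L4]
end
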